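/- arXiv:math/0310129 — 3 statements merged into one kernel-verified Lean document; each statement's English description precedes it below -/
import Mathlib

section
/- Let R be a Noetherian ring, I an ideal of R, and M a finitely generated R-module with Γ_I(M) = 0 (i.e., no nonzero element of M is annihilated by a power of I). Then for every natural number n, the set of associated primes of the submodule I^n • M equals the set of associated primes of M. -/
/-- The `I`-torsion submodule `Γ_I(M) = ⋃ n, (0 :_M I^n)`. -/
noncomputable def torsionGamma {R : Type*} [CommRing R] (I : Ideal R) (M : Type*)
    [AddCommGroup M] [Module R M] : Submodule R M :=
  ⨆ n : ℕ, Submodule.torsionBySet R M ((I ^ n : Ideal R) : Set R)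

/-- If `Γ_I(M) = 0`, then for every `n`, `Ass(I^n • M) = Ass(M)`. -/
theorem stmt_0 {R M : Type*} [CommRing R] [IsNoetherianRing R] [AddCommGroup M] [Module R M]
    [Module.Finite R M] (I : Ideal R) (hGamma : torsionGamma I M = ⊥) :
    ∀ n : ℕ, associatedPrimes R ↥(I ^ n • (⊤ : Submodule R M)) = associatedPrimes R M := by
  intro n
  apply Set.Subset.antisymm
  · intro p hp
    exact hp.map_of_injective (Submodule.subtype _) (Submodule.injective_subtype _)
  · intro p hp
    obtain ⟨hprime, m, rfl⟩ := isAssociatedPrime_iff.mp hp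
    rw [show (⊥ : Submodule R M).colon {m} = (Submodule.span R {m}).annihilator by
      ext r; simp [Submodule.mem_colon_singleton, Submodule.mem_annihilator_span_singleton]] at hprime ⊢
    have hm : ¬ ∀ a ∈ I ^ n, a • m = 0 := by
      intro h
      have hmem : m ∈ torsionGamma I M :=
        le_iSup (fun k => Submodule.torsionBySet R M ((I ^ k : Ideal R) : Set R)) n
          ((Submodule.mem_torsionBySet_iff _ _).mpr fun a => h a a.2)
      rw [hGamma, Submodule.mem_bot] at hmem
      subst hmem
      apply hprime.ne_top
      rw [Ideal.eq_top_iff_one, Submodule.mem_annihilator_span_singleton, one_smul]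
    push_neg at hm
    obtain ⟨a, haI, hax⟩ := hm
    have haP : a ∉ (Submodule.span R {m}).annihilator := by
      rwa [Submodule.mem_annihilator_span_singleton]
    refine isAssociatedPrime_iff.mpr ⟨hprime, ⟨a • m, Submodule.smul_mem_smul haI Submodule.mem_top⟩, ?_⟩
    ext r
    rw [Submodule.mem_annihilator_span_singleton, Submodule.mem_colon_singleton, Submodule.mem_bot]
    have hco : (r • (⟨a • m, Submodule.smul_mem_smul haI Submodule.mem_top⟩ :
        ↥(I ^ n • (⊤ : Submodule R M))) = 0) ↔ r • a • m = 0 := by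
      simp [Subtype.ext_iff]
    rw [hco]
    constructor
    · intro h
      rw [smul_comm, h, smul_zero]
    · intro h
      have : r * a ∈ (Submodule.span R {m}).annihilator := by
        rw [Submodule.mem_annihilator_span_singleton, mul_smul]
        exact h
      rcases hprime.mem_or_mem this with h1 | h2
      · rwa [Submodule.mem_annihilator_span_singleton] at h1
      · exact absurd h2 haP
end

section
/- Let R be a Noetherian ring, I an ideal, M a finitely generated R-module, and f ∈ R. The following are equivalent: (a) multiplication by f on M / Γ_I(M) is injective; (b) there exists n₀ such that for all n ≥ n₀, multiplication by f on I^n • M is injective. -/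
lemma torsionGamma_mono {R : Type*} [CommRing R] (I : Ideal R) (M : Type*)
    [AddCommGroup M] [Module R M] :
    Monotone (fun n : ℕ => Submodule.torsionBySet R M ((I ^ n : Ideal R) : Set R)) := by
  intro a b hab
  exact Submodule.torsionBySet_le_torsionBySet_of_subset
    (by exact_mod_cast Ideal.pow_le_pow_right hab)

lemma exists_torsionGamma_eq {R M : Type*} [CommRing R] [IsNoetherianRing R] [AddCommGroup M]
    [Module R M] [Module.Finite R M] (I : Ideal R) :
    ∃ c : ℕ, torsionGamma I M = Submodule.torsionBySet R M ((I ^ c : Ideal R) : Set R) := by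
  have : IsNoetherian R M := inferInstance
  obtain ⟨c, hc⟩ := monotone_stabilizes_iff_noetherian.mpr this
    ⟨fun n => Submodule.torsionBySet R M ((I ^ n : Ideal R) : Set R), torsionGamma_mono I M⟩
  refine ⟨c, le_antisymm (iSup_le fun n => ?_) (le_iSup (fun n : ℕ => Submodule.torsionBySet R M ((I ^ n : Ideal R) : Set R)) c)⟩
  rcases le_total n c with h | h
  · exact torsionGamma_mono I M h
  · exact le_of_eq (hc n h).symm

universe u v

section AR
variable {R : Type u} {M : Type v} [CommRing R] [IsNoetherianRing R] [AddCommGroup M]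
  [Module R M] [Module.Finite R M]

/-- Weak Artin–Rees vanishing, transferred across universes via `ULift`. -/
lemma weak_AR (I : Ideal R) (N : Submodule R M) (c : ℕ)
    (hbot : ∀ r ∈ I ^ c, ∀ x ∈ N, r • x = (0 : M)) :
    ∃ k : ℕ, ∀ n ≥ k, ∀ x ∈ I ^ n • (⊤ : Submodule R M) ⊓ N, x = 0 := by
  set e : R ≃+* ULift.{v} R := ULift.ringEquiv.symm with he
  set I' : Ideal (ULift.{v} R) := I.map (e : R →+* ULift.{v} R) with hI'
  haveI : IsNoetherianRing (ULift.{v} R) := isNoetherianRing_of_ringEquiv R e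
  haveI : Module.Finite (ULift.{v} R) (ULift.{u} M) :=
    Module.Finite.of_restrictScalars_finite R _ _
  have hmemI : ∀ (n : ℕ) (r : ULift.{v} R), r ∈ I' ^ n ↔ r.down ∈ I ^ n := by
    intro n r
    have h1 : I' ^ n = Ideal.map (e : R →+* ULift.{v} R) (I ^ n) := (Ideal.map_pow _ _ _).symm
    rw [h1]
    constructor
    · intro h
      have hle : Ideal.map (e : R →+* ULift.{v} R) (I ^ n) ≤
          (I ^ n).comap (ULift.ringEquiv : ULift.{v} R ≃+* R).toRingHom :=
        Ideal.map_le_iff_le_comap.mpr (fun a ha => by exact ha)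
      exact hle h
    · intro h
      have := Ideal.mem_map_of_mem (e : R →+* ULift.{v} R) h
      exact this
  set N' : Submodule (ULift.{v} R) (ULift.{u} M) :=
    { carrier := {x | x.down ∈ N}
      add_mem' := fun ha hb => N.add_mem ha hb
      zero_mem' := N.zero_mem
      smul_mem' := fun r x hx => N.smul_mem r.down hx } with hN'
  have hmemS : ∀ (n : ℕ) (x : ULift.{u} M),
      x ∈ I' ^ n • (⊤ : Submodule (ULift.{v} R) (ULift.{u} M)) ↔
        x.down ∈ I ^ n • (⊤ : Submodule R M) := by
    intro n x
    constructor
    · intro hx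
      refine Submodule.smul_induction_on (p := fun y => y.down ∈ I ^ n • (⊤ : Submodule R M))
        hx (fun r hr m _ => ?_) (fun y z hy hz => ?_)
      · exact Submodule.smul_mem_smul ((hmemI n r).mp hr) Submodule.mem_top
      · exact Submodule.add_mem _ hy hz
    · intro hx
      have key : ∀ y ∈ I ^ n • (⊤ : Submodule R M),
          (ULift.up y : ULift.{u} M) ∈ I' ^ n • (⊤ : Submodule (ULift.{v} R) (ULift.{u} M)) := by
        intro y hy
        refine Submodule.smul_induction_on
          (p := fun z => (ULift.up z : ULift.{u} M) ∈ I' ^ n • ⊤) hy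
          (fun r hr m _ => ?_) (fun a b ha hb => ?_)
        · exact Submodule.smul_mem_smul (I := I' ^ n) (N := ⊤)
            (r := (ULift.up r : ULift.{v} R)) (n := ULift.up m)
            ((hmemI n _).mpr hr) Submodule.mem_top
        · exact Submodule.add_mem _ ha hb
      simpa using key x.down hx
  obtain ⟨k, hk⟩ := Ideal.exists_pow_inf_eq_pow_smul I' N'
  refine ⟨k + c, fun n hn x hx => ?_⟩
  have hx' : (ULift.up x : ULift.{u} M) ∈ I' ^ n • ⊤ ⊓ N' :=
    ⟨(hmemS n _).mpr hx.1, hx.2⟩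
  rw [hk n (le_trans (Nat.le_add_right k c) hn)] at hx'
  have hle : I' ^ (n - k) • (I' ^ k • ⊤ ⊓ N') ≤ I' ^ c • N' :=
    le_trans (Submodule.smul_mono le_rfl inf_le_right)
      (Submodule.smul_mono (Ideal.pow_le_pow_right (by omega)) le_rfl)
  have hIc : I' ^ c • N' = ⊥ := by
    rw [eq_bot_iff]
    refine Submodule.smul_le.mpr fun r hr m hm => ?_
    have : (r • m).down = (0 : M) := hbot r.down ((hmemI c r).mp hr) m.down hm
    exact ULift.ext _ _ this
  have := hle hx'
  rw [hIc, Submodule.mem_bot] at this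
  exact congrArg ULift.down this

end AR

/-- Multiplication by `f` is injective on `M/Γ_I(M)` iff it is injective on `I^n • M`
for all large `n`. -/
theorem stmt_2 {R M : Type*} [CommRing R] [IsNoetherianRing R] [AddCommGroup M] [Module R M]
    [Module.Finite R M] (I : Ideal R) (f : R) :
    Function.Injective (fun x : M ⧸ torsionGamma I M => f • x) ↔
      ∃ n₀ : ℕ, ∀ n ≥ n₀,
        Function.Injective (fun x : ↥(I ^ n • (⊤ : Submodule R M)) => f • x) := by
  obtain ⟨c, hc⟩ := exists_torsionGamma_eq (M := M) I
  set Γ := torsionGamma I M with hΓ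
  -- reformulate injectivity on the quotient
  have hquot : Function.Injective (fun x : M ⧸ Γ => f • x) ↔
      ∀ x : M, f • x ∈ Γ → x ∈ Γ := by
    constructor
    · intro h x hx
      have : (f • (Submodule.Quotient.mk x : M ⧸ Γ)) = f • (0 : M ⧸ Γ) := by
        rw [smul_zero, ← Submodule.Quotient.mk_smul, Submodule.Quotient.mk_eq_zero]
        exact hx
      have := h this
      rwa [Submodule.Quotient.mk_eq_zero] at this
    · intro h x y hxy
      obtain ⟨x, rfl⟩ := Submodule.Quotient.mk_surjective Γ x
      obtain ⟨y, rfl⟩ := Submodule.Quotient.mk_surjective Γ y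
      simp only [← Submodule.Quotient.mk_smul] at hxy
      rw [Submodule.Quotient.eq] at hxy ⊢
      have : f • (x - y) ∈ Γ := by rwa [smul_sub]
      exact h _ this
  rw [hquot]
  constructor
  · -- (a) ⇒ (b)
    intro ha
    have hbot : ∀ r ∈ I ^ c, ∀ x ∈ Γ, r • x = (0 : M) := by
      intro r hr x hx
      rw [hc] at hx
      exact (Submodule.mem_torsionBySet_iff _ _).mp hx ⟨r, hr⟩
    obtain ⟨k, hk⟩ := weak_AR I Γ c hbot
    refine ⟨k, fun n hn => ?_⟩
    intro x y hxy
    have hmem : (x : M) - y ∈ I ^ n • (⊤ : Submodule R M) := sub_mem x.2 y.2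
    have hf : f • ((x : M) - y) = 0 := by
      have : f • (x : M) = f • (y : M) := congrArg Subtype.val hxy
      rw [smul_sub, this, sub_self]
    have hγ : (x : M) - y ∈ Γ := by
      apply ha
      rw [hf]; exact zero_mem Γ
    have : (x : M) - y = 0 := hk n hn _ ⟨hmem, hγ⟩
    exact Subtype.ext (sub_eq_zero.mp this)
  · -- (b) ⇒ (a)
    rintro ⟨n₀, hb⟩ x hx
    -- f • x ∈ Γ, so I^c • (f•x) = 0
    rw [hc] at hx
    set n := max c n₀ with hn
    -- show I^n • x = 0, i.e. x ∈ torsion by I^n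
    rw [hΓ]
    refine le_iSup (fun n : ℕ => Submodule.torsionBySet R M ((I ^ n : Ideal R) : Set R)) n ?_
    rw [Submodule.mem_torsionBySet_iff]
    rintro ⟨a, ha⟩
    have hax : a • x ∈ I ^ n • (⊤ : Submodule R M) :=
      Submodule.smul_mem_smul ha Submodule.mem_top
    have hfa : f • (a • x) = 0 := by
      rw [smul_comm]
      have : a • (f • x) = 0 := by
        have := (Submodule.mem_torsionBySet_iff _ _).mp hx
          ⟨a, Ideal.pow_le_pow_right (le_max_left c n₀) ha⟩
        exact this
      simpa using this
    have h0 : (⟨a • x, hax⟩ : ↥(I ^ n • (⊤ : Submodule R M)))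
        = ⟨0, Submodule.zero_mem _⟩ :=
      hb n (le_max_right c n₀) (Subtype.ext (by simpa using hfa))
    simpa [Subtype.ext_iff] using h0
end

section
/- Let R be a Noetherian ring, I an ideal, M a finitely generated R-module, f ∈ R. Suppose multiplication by f is injective on M / Γ_I(M). Then for all sufficiently large n, multiplication by f maps I^n M injectively into I^n M, i.e., (0 :_{I^n M} f) = 0. -/
section ArtinReesPoly
universe u v
variable {R : Type u} {M : Type v} [CommRing R] [AddCommGroup M] [Module R M]

attribute [local instance] RingHomInvPair.of_ringEquiv

private def upEquiv :
    M ≃ₛₗ[((ULift.ringEquiv.symm : R ≃+* ULift.{v} R) : R →+* ULift.{v} R)] ULift.{u} M where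
  toFun := ULift.up
  invFun := ULift.down
  left_inv _ := rfl
  right_inv _ := rfl
  map_add' _ _ := rfl
  map_smul' _ _ := rfl

private noncomputable def Φ : Submodule R M ≃o Submodule (ULift.{v} R) (ULift.{u} M) :=
  Submodule.orderIsoMapComap (upEquiv (R := R) (M := M))

private lemma Φ_smul (J : Ideal R) (p : Submodule R M) :
    Φ (J • p) = (J.map (ULift.ringEquiv.symm : R ≃+* ULift.{v} R) : Ideal (ULift.{v} R))
      • (Φ p : Submodule (ULift.{v} R) (ULift.{u} M)) := by
  show Submodule.map (upEquiv (R := R) (M := M)).toLinearMap (J • p) = _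
  apply le_antisymm
  · rintro _ ⟨x, hx, rfl⟩
    refine Submodule.smul_induction_on hx (fun r hr m hm => ?_) (fun a b ha hb => ?_)
    · have : (upEquiv (R := R) (M := M)).toLinearMap (r • m)
          = (ULift.ringEquiv.symm r : ULift.{v} R) • (upEquiv (R := R) (M := M)).toLinearMap m := rfl
      rw [this]
      exact Submodule.smul_mem_smul (Ideal.mem_map_of_mem _ hr) ⟨m, hm, rfl⟩
    · rw [map_add]; exact Submodule.add_mem _ ha hb
  · refine Submodule.smul_le.mpr fun r' hr' y hy => ?_
    obtain ⟨r, hr, rfl⟩ := Ideal.mem_map_iff_of_surjective _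
      (ULift.ringEquiv.symm : R ≃+* ULift.{v} R).surjective |>.mp hr'
    obtain ⟨m, hm, rfl⟩ := hy
    exact ⟨r • m, Submodule.smul_mem_smul hr hm, rfl⟩

set_option maxHeartbeats 1000000 in
/-- Universe-polymorphic Artin–Rees lemma. -/
theorem exists_pow_inf_eq_pow_smul' [IsNoetherianRing R] [Module.Finite R M]
    (I : Ideal R) (N : Submodule R M) :
    ∃ k : ℕ, ∀ n ≥ k, I ^ n • ⊤ ⊓ N
      = I ^ (n - k) • (I ^ k • (⊤ : Submodule R M) ⊓ N) := by
  let σ : R ≃+* ULift.{v} R := ULift.ringEquiv.symm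
  haveI : IsNoetherianRing (ULift.{v} R) := isNoetherianRing_of_ringEquiv R σ
  haveI : Module.Finite (ULift.{v} R) (ULift.{u} M) := by
    rw [Module.finite_def, Submodule.fg_def]
    obtain ⟨s, hfin, hs⟩ := Submodule.fg_def.mp (Module.Finite.fg_top (R := R) (M := M))
    refine ⟨⇑(upEquiv (R := R) (M := M)).toLinearMap '' s, hfin.image _, ?_⟩
    have := congrArg (Φ (R := R) (M := M)) hs
    rw [Φ.map_top] at this
    rw [← this]
    show Submodule.span _ _ = Submodule.map _ (Submodule.span R s)
    rw [Submodule.map_span]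
  obtain ⟨k, hk⟩ := Ideal.exists_pow_inf_eq_pow_smul (I.map σ) (Φ N)
  refine ⟨k, fun n hn => Φ.injective ?_⟩
  simp only [Φ.map_inf, Φ_smul, Φ.map_top, Ideal.map_pow]
  exact hk n hn

end ArtinReesPoly

/-- If multiplication by `f` is injective on `M/Γ_I(M)`, then for all sufficiently
large `n`, multiplication by `f` is injective on `I^n • M`. -/
theorem stmt_10 {R M : Type*} [CommRing R] [IsNoetherianRing R] [AddCommGroup M] [Module R M]
    [Module.Finite R M] (I : Ideal R) (f : R)
    (hf : Function.Injective (fun x : M ⧸ torsionGamma I M => f • x)) :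
    ∃ n₀ : ℕ, ∀ n ≥ n₀, ∀ x ∈ (I ^ n • (⊤ : Submodule R M)), f • x = 0 → x = 0 := by
  set K : Submodule R M := LinearMap.ker (LinearMap.lsmul R M f) with hKdef
  -- K ≤ Γ
  have hKΓ : K ≤ torsionGamma I M := by
    intro x hx
    have hx0 : f • x = 0 := hx
    have : (fun y : M ⧸ torsionGamma I M => f • y) (Submodule.Quotient.mk x)
        = (fun y : M ⧸ torsionGamma I M => f • y) 0 := by
      simp [← Submodule.Quotient.mk_smul, hx0]
    exact (Submodule.Quotient.mk_eq_zero _).mp (hf this)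
  -- stabilization of the torsion filtration
  have mono : Monotone fun n : ℕ => Submodule.torsionBySet R M ((I ^ n : Ideal R) : Set R) := by
    intro a b hab
    exact Submodule.torsionBySet_le_torsionBySet_of_subset (Ideal.pow_le_pow_right hab)
  have inst : IsNoetherian R M := isNoetherian_of_isNoetherianRing_of_finite R M
  obtain ⟨k, hk⟩ := monotone_stabilizes_iff_noetherian.mpr inst
    ⟨fun n => Submodule.torsionBySet R M ((I ^ n : Ideal R) : Set R), mono⟩
  have hΓk : torsionGamma I M ≤ Submodule.torsionBySet R M ((I ^ k : Ideal R) : Set R) := by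
    rw [torsionGamma]
    apply iSup_le
    intro n
    rcases le_total n k with h | h
    · exact mono h
    · exact le_of_eq (hk n h).symm
  -- Artin-Rees
  obtain ⟨c, hc⟩ := exists_pow_inf_eq_pow_smul' I K
  refine ⟨k + c, fun n hn x hxM hxf => ?_⟩
  have hxK : x ∈ K := hxf
  have hmem : x ∈ I ^ (n - c) • (I ^ c • (⊤ : Submodule R M) ⊓ K) := by
    rw [← hc n (le_trans (Nat.le_add_left c k) hn)]
    exact ⟨hxM, hxK⟩
  have hbot : I ^ (n - c) • (I ^ c • (⊤ : Submodule R M) ⊓ K) ≤ ⊥ := by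
    refine Submodule.smul_le.mpr fun r hr y hy => ?_
    have hyK : y ∈ Submodule.torsionBySet R M ((I ^ k : Ideal R) : Set R) :=
      hΓk (hKΓ hy.2)
    have hrk : r ∈ (I ^ k : Ideal R) := by
      refine Ideal.pow_le_pow_right ?_ hr
      omega
    exact (Submodule.mem_torsionBySet_iff _ _).mp hyK ⟨r, hrk⟩
  simpa using hbot hmem
end
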